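/- Let M = ℤ^n (n ≥ 3) with the type A_{n−1} root system R = {eᵢ − eⱼ : i ≠ j} and simple roots Δ = {eᵢ − eᵢ₊₁}. Suppose h is an automorphism of the root datum sending each simple root eᵢ − eᵢ₊₁ to e_{n−i} − e_{n−i+1} and acting trivially on M/⟨R⟩. Then no such h exists unless n = 2; equivalently, for n ≥ 3 there is no automorphism of M permuting R, reversing the Dynkin diagram of Δ, and inducing the identity on M/⟨R⟩. -/
import Mathlib


/-- The set of roots of the type `A_{n-1}` root system inside `M = ℤ^n`:
`R = {eᵢ - eⱼ : i ≠ j}`. -/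
def typeARoots (n : ℕ) : Set (Fin n → ℤ) :=
  {v | ∃ i j : Fin n, i ≠ j ∧ v = Pi.single i 1 - Pi.single j 1}

/-- `h` is an automorphism of the type `A_{n-1}` root datum `(M, M^∨, R, R^∨)` on `M = ℤ^n`:
a ℤ-linear automorphism of `M` permuting `R`, whose transpose permutes the coroots. -/
def IsRootDatumAutA (n : ℕ) (h : (Fin n → ℤ) ≃ₗ[ℤ] (Fin n → ℤ)) : Prop :=
  (∀ v ∈ typeARoots n, h v ∈ typeARoots n) ∧
  (∀ v ∈ typeARoots n, h.symm v ∈ typeARoots n) ∧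
  (∀ i j : Fin n, i ≠ j →
    ∃ i' j' : Fin n, i' ≠ j' ∧ ∀ x : Fin n → ℤ, h x i - h x j = x i' - x j')

lemma sum_eq_zero_of_mem_spanA {n : ℕ} {v : Fin n → ℤ}
    (hv : v ∈ Submodule.span ℤ (typeARoots n)) : ∑ i, v i = 0 := by
  induction hv using Submodule.span_induction with
  | mem v hv =>
    obtain ⟨i, j, hij, rfl⟩ := hv
    simp [Finset.sum_sub_distrib, Pi.single_apply]
  | zero => simp
  | add x y _ _ hx hy => simp [Finset.sum_add_distrib, hx, hy]
  | smul a x _ hx => simp [← Finset.mul_sum, hx]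

/-- For `n ≥ 3` there is no automorphism of the type `A_{n-1}` root datum on `ℤ^n`
which reverses the Dynkin diagram of the simple roots (sending the `i`-th simple root
`eᵢ - eᵢ₊₁` (0-indexed `j`: `e_j - e_{j+1}`) to `e_{n-2-j} - e_{n-1-j}`) and induces the
identity on `M / ⟨R⟩`. -/
theorem stmt1 (n : ℕ) (hn : 3 ≤ n) (h : (Fin n → ℤ) ≃ₗ[ℤ] (Fin n → ℤ))
    (hAut : IsRootDatumAutA n h)
    (hΔrev : ∀ j : ℕ, ∀ hj : j + 1 < n,
      h (Pi.single (⟨j, Nat.lt_of_succ_lt hj⟩ : Fin n) 1 - Pi.single (⟨j + 1, hj⟩ : Fin n) 1)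
        = Pi.single (⟨n - 2 - j, by omega⟩ : Fin n) 1
            - Pi.single (⟨n - 1 - j, by omega⟩ : Fin n) 1)
    (hrad : ∀ m : Fin n → ℤ, h m - m ∈ Submodule.span ℤ (typeARoots n)) :
    False := by
  have h0n : 0 < n := by omega
  have hlast : n - 1 < n := by omega
  set lastI : Fin n := ⟨n - 1, hlast⟩ with hlastI
  set zeroI : Fin n := ⟨0, h0n⟩ with hzeroI
  -- telescoping: h (e₀ - e_j) = e_{n-1-j} - e_{n-1}
  have keyA : ∀ j : ℕ, ∀ hj : j < n,
      h (Pi.single zeroI 1 - Pi.single (⟨j, hj⟩ : Fin n) 1)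
        = Pi.single (⟨n - 1 - j, by omega⟩ : Fin n) 1 - Pi.single lastI 1 := by
    intro j
    induction j with
    | zero =>
      intro hj
      simp [hzeroI, hlastI]
    | succ j ih =>
      intro hj
      have hj' : j < n := by omega
      have step := hΔrev j hj
      have hsplit : (Pi.single zeroI 1 - Pi.single (⟨j+1, hj⟩ : Fin n) 1 :
          Fin n → ℤ)
          = (Pi.single zeroI 1 - Pi.single (⟨j, hj'⟩ : Fin n) 1)
            + (Pi.single (⟨j, hj'⟩ : Fin n) 1 - Pi.single (⟨j+1, hj⟩ : Fin n) 1) := by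
        ring
      rw [hsplit, map_add, ih hj', step]
      have h1 : (⟨n - 1 - (j+1), by omega⟩ : Fin n) = (⟨n - 2 - j, by omega⟩ : Fin n) := by
        apply Fin.ext; simp; omega
      rw [h1]
      ring
  -- every h (single k 1) has coordinate sum 1
  have sumc : ∀ k : Fin n, ∑ i, h (Pi.single k 1) i = 1 := by
    intro k
    have h2 : ∑ i, (h (Pi.single k 1) i - (Pi.single k 1 : Fin n → ℤ) i) = 0 := by
      simpa [Pi.sub_apply] using sum_eq_zero_of_mem_spanA (hrad (Pi.single k 1))
    rw [Finset.sum_sub_distrib] at h2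
    have h3 : ∑ i, (Pi.single k 1 : Fin n → ℤ) i = 1 := by
      rw [Finset.sum_pi_single']
      simp
    omega
  set one : Fin n → ℤ := fun _ => 1 with hone
  -- h(𝟙) is constant
  have hconst : ∀ i j : Fin n, h one i = h one j := by
    intro i j
    by_cases hij : i = j
    · rw [hij]
    · obtain ⟨i', j', _, hx⟩ := hAut.2.2 i j hij
      have hx1 : h one i - h one j = 1 - 1 := hx one
      omega
  have hone_sum : one = ∑ k : Fin n, Pi.single k (1:ℤ) := by
    simpa using (Finset.univ_sum_single one).symm
  have hhone : h one = ∑ k : Fin n, h (Pi.single k 1) := by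
    rw [hone_sum, map_sum]
  -- coordinate sum of h 𝟙 is n
  have hsum_hone : ∑ i, h one i = n := by
    rw [hhone]
    simp only [Finset.sum_apply]
    rw [Finset.sum_comm]
    simp [sumc]
  -- hence h 𝟙 = 𝟙, in particular (h 𝟙) lastI = 1
  have hval : h one lastI = 1 := by
    have hc : ∑ i : Fin n, h one i = n * h one lastI := by
      rw [Finset.sum_congr rfl (fun i _ => hconst i lastI)]
      simp [mul_comm]
    have hne : (n : ℤ) ≠ 0 := by positivity
    have : (n : ℤ) * h one lastI = (n : ℤ) * 1 := by
      rw [mul_one, ← hc, hsum_hone]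
    exact mul_left_cancel₀ hne this
  -- last coordinate of h (single k 1)
  set C : ℤ := h (Pi.single zeroI 1) lastI with hC
  have hcoord : ∀ k : Fin n, h (Pi.single k 1) lastI
      = C + 1 - (if k = zeroI then 1 else 0) := by
    intro k
    have hk := keyA k.1 k.2
    rw [map_sub] at hk
    have hkc := congrFun hk lastI
    simp only [Pi.sub_apply, Fin.eta] at hkc
    have e1 : (Pi.single lastI 1 : Fin n → ℤ) lastI = 1 := by simp
    have e2 : (Pi.single (⟨n - 1 - k.1, by omega⟩ : Fin n) 1 : Fin n → ℤ) lastI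
        = if k = zeroI then 1 else 0 := by
      rw [Pi.single_apply]
      have hiff : (lastI = (⟨n - 1 - k.1, by omega⟩ : Fin n)) ↔ (k = zeroI) := by
        rw [Fin.ext_iff, Fin.ext_iff]
        simp only [hlastI, hzeroI]
        omega
      simp only [hiff]
    rw [e1, e2] at hkc
    linarith [hkc]
  -- sum: n * (C + 1) - 1 = 1
  have hfinal : (n : ℤ) * (C + 1) - 1 = 1 := by
    have hs : ∑ k : Fin n, h (Pi.single k 1) lastI = h one lastI := by
      rw [hhone, Finset.sum_apply]
    rw [hval] at hs
    rw [Finset.sum_congr rfl (fun k _ => hcoord k)] at hs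
    rw [Finset.sum_sub_distrib] at hs
    simp [Finset.sum_ite_eq', mul_comm] at hs
    linarith [hs]
  have h3 : (3 : ℤ) ≤ n := by exact_mod_cast hn
  rcases le_or_gt (C + 1) 0 with hc | hc
  · nlinarith
  · have : 1 ≤ C + 1 := hc
    nlinarith
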